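/- Let d, e ∈ ℕ₀, let I be a real radical ideal of ℝ[x_1,...,x_n], and let U be a symmetric s(d)×s(d) real matrix such that the polynomial v_d^* U v_d lies in I, where v_d is the column vector of all monomials of degree at most d and s(d) is their number. If W is an s(e)×s(d) real matrix with U ⪰ W^* W, then the polynomial v_e^* W v_d lies in I. -/

import Mathlib

open MvPolynomial Matrix
attribute [local instance] Matrix.frobeniusNormedAddCommGroup

noncomputable section

abbrev RP (n : ℕ) := MvPolynomial (Fin n) ℝ

/-- Evaluation of the linear pencil `A₀ + ∑ xᵢ Aᵢ` at a point `x ∈ ℝⁿ`. -/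
def pencilEval {n α : ℕ} (A0 : Matrix (Fin α) (Fin α) ℝ) (A : Fin n → Matrix (Fin α) (Fin α) ℝ)
    (x : Fin n → ℝ) : Matrix (Fin α) (Fin α) ℝ :=
  A0 + ∑ i, x i • A i

/-- The linear pencil `A₀ + ∑ xᵢ Aᵢ` as a matrix of polynomials. -/
def pencilPoly {n α : ℕ} (A0 : Matrix (Fin α) (Fin α) ℝ) (A : Fin n → Matrix (Fin α) (Fin α) ℝ) :
    Matrix (Fin α) (Fin α) (RP n) :=
  A0.map C + ∑ i, (X i : RP n) • (A i).map C

/-- `v^* M v` for a matrix of polynomials. -/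
def quadForm {n α : ℕ} (M : Matrix (Fin α) (Fin α) (RP n)) (v : Fin α → RP n) : RP n :=
  v ⬝ᵥ (M *ᵥ v)

/-- A sum of squares of polynomials. -/
def IsSos {n : ℕ} (p : RP n) : Prop := ∃ (k : ℕ) (q : Fin k → RP n), p = ∑ i, q i ^ 2

/-- An sos-matrix: a finite sum `∑ vⱼ vⱼ^*` with `vⱼ` vectors of polynomials. -/
def IsSosMatrix {n α : ℕ} (S : Matrix (Fin α) (Fin α) (RP n)) : Prop :=
  ∃ (k : ℕ) (v : Fin k → Fin α → RP n), S = ∑ j, Matrix.vecMulVec (v j) (v j)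

/-- Membership in the quadratic module `M_A` associated to the pencil. -/
def InQuadModule {n α : ℕ} (A0 : Matrix (Fin α) (Fin α) ℝ)
    (A : Fin n → Matrix (Fin α) (Fin α) ℝ) (p : RP n) : Prop :=
  ∃ s, IsSos s ∧ ∃ (k : ℕ) (v : Fin k → Fin α → RP n),
    p = s + ∑ j, quadForm (pencilPoly A0 A) (v j)

/-- Strong infeasibility: positive distance (Frobenius norm) between the range of the
pencil and the PSD cone. -/
def StronglyInfeasible {n α : ℕ} (A0 : Matrix (Fin α) (Fin α) ℝ)
    (A : Fin n → Matrix (Fin α) (Fin α) ℝ) : Prop :=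
  ∃ ε > (0:ℝ), ∀ (x : Fin n → ℝ) (B : Matrix (Fin α) (Fin α) ℝ), B.PosSemidef →
    ε ≤ dist (pencilEval A0 A x) B
/-- Index type for monomials of total degree at most `d` in `n` variables.
(A monomial of total degree ≤ d has each exponent ≤ d, so this enumerates exactly the
`s(d)` monomials of degree ≤ d.) -/
def MonIdx (n d : ℕ) : Type := {m : Fin n → Fin (d+1) // (∑ i, (m i : ℕ)) ≤ d}

instance (n d : ℕ) : Fintype (MonIdx n d) := by unfold MonIdx; infer_instance

instance (n d : ℕ) : DecidableEq (MonIdx n d) := by unfold MonIdx; infer_instance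

/-- The vector of all monomials of degree at most `d`. -/
def vecx (n d : ℕ) : MonIdx n d → RP n := fun m => ∏ i, (X i : RP n) ^ (m.1 i : ℕ)

/-- An ideal is real radical if `f^{2k} + s ∈ I` with `s` a sum of squares forces `f ∈ I`. -/
def IsRealRadical {n : ℕ} (I : Ideal (RP n)) : Prop :=
  ∀ (f : RP n) (k : ℕ), 1 ≤ k → ∀ s : RP n, IsSos s → f ^ (2 * k) + s ∈ I → f ∈ I


lemma isSos_add {n : ℕ} {p q : RP n} (hp : IsSos p) (hq : IsSos q) : IsSos (p + q) := by
  obtain ⟨k, u, rfl⟩ := hp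
  obtain ⟨l, w, rfl⟩ := hq
  exact ⟨k + l, Fin.addCases u w, by rw [Fin.sum_univ_add]; simp⟩

lemma isSos_fintype_sum {n : ℕ} {ι : Type} [Fintype ι] (q : ι → RP n) :
    IsSos (∑ i, q i ^ 2) := by
  refine ⟨Fintype.card ι, fun j => q ((Fintype.equivFin ι).symm j), ?_⟩
  exact (Equiv.sum_comp (Fintype.equivFin ι).symm (fun i => q i ^ 2)).symm

lemma quad_sq {n : ℕ} {α β : Type} [Fintype α] [Fintype β] [DecidableEq α]
    (M : Matrix β α ℝ) (v : α → RP n) :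
    v ⬝ᵥ ((Mᵀ * M).map C *ᵥ v) = ∑ j, ((M.map C) *ᵥ v) j ^ 2 := by
  have h : (Mᵀ * M).map (C : ℝ →+* RP n) = @HMul.hMul _ _ _ Matrix.instHMulOfFintypeOfMulOfAddCommMonoid ((M.map C)ᵀ) (M.map C) := by
    rw [Matrix.map_mul, Matrix.transpose_map]
  rw [h, ← Matrix.mulVec_mulVec, Matrix.dotProduct_mulVec, Matrix.vecMul_transpose]
  simp [dotProduct, sq]

/-- If `I` is real radical, `v_d^* U v_d ∈ I` and `U ⪰ W^* W`, then `v_e^* W v_d ∈ I`. -/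
theorem stmt_9 {n : ℕ} (d e : ℕ) (I : Ideal (RP n)) (hI : IsRealRadical I)
    (U : Matrix (MonIdx n d) (MonIdx n d) ℝ) (hU : U.IsSymm)
    (hUI : (vecx n d) ⬝ᵥ ((U.map C) *ᵥ vecx n d) ∈ I)
    (W : Matrix (MonIdx n e) (MonIdx n d) ℝ) (hW : (U - Wᵀ * W).PosSemidef) :
    (vecx n e) ⬝ᵥ ((W.map C) *ᵥ vecx n d) ∈ I := by
  classical
  obtain ⟨B, hB⟩ : ∃ B : Matrix (MonIdx n d) (MonIdx n d) ℝ, U - Wᵀ * W = Bᴴ * B := by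
    open scoped MatrixOrder in
    obtain ⟨X, hX, -, hXe⟩ := CFC.exists_sqrt_of_isSelfAdjoint_of_quasispectrumRestricts
      hW.isHermitian (QuasispectrumRestricts.nnreal_of_nonneg hW.nonneg)
    refine ⟨X, ?_⟩
    rw [← Matrix.star_eq_conjTranspose, hX.star_eq]
    exact hXe.symm
  have hBt : Bᴴ = Bᵀ := by ext i j; simp [Matrix.conjTranspose_apply]
  rw [hBt] at hB
  set g : MonIdx n e → RP n := (W.map C) *ᵥ vecx n d with hg
  have hUdecomp : U = Bᵀ * B + Wᵀ * W := by rw [← hB]; abel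
  have key : (vecx n d) ⬝ᵥ ((U.map C) *ᵥ vecx n d)
      = (∑ j, ((B.map C) *ᵥ vecx n d) j ^ 2) + ∑ m, g m ^ 2 := by
    have hmap : ((Bᵀ * B + Wᵀ * W).map (C : ℝ →+* RP n))
        = (Bᵀ * B).map C + (Wᵀ * W).map C := by
      exact Matrix.map_add _ (map_add C) _ _
    rw [hUdecomp, hmap, Matrix.add_mulVec, dotProduct_add, quad_sq, quad_sq]
  have hgI : ∀ m₀ : MonIdx n e, g m₀ ∈ I := by
    intro m₀
    refine hI (g m₀) 1 le_rfl
      ((∑ j, ((B.map C) *ᵥ vecx n d) j ^ 2) + ∑ m ∈ Finset.univ.erase m₀, g m ^ 2) ?_ ?_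
    · refine isSos_add (isSos_fintype_sum _) ?_
      have h2 : (∑ m ∈ Finset.univ.erase m₀, g m ^ 2)
          = ∑ m : {x // x ∈ Finset.univ.erase m₀}, g m.1 ^ 2 := by
        rw [Finset.univ_eq_attach]; exact (Finset.sum_attach _ _).symm
      rw [h2]
      exact isSos_fintype_sum _
    · have hsplit : (∑ m, g m ^ 2) = g m₀ ^ 2 + ∑ m ∈ Finset.univ.erase m₀, g m ^ 2 :=
        (Finset.add_sum_erase _ _ (Finset.mem_univ m₀)).symm
      have : g m₀ ^ (2 * 1) + ((∑ j, ((B.map C) *ᵥ vecx n d) j ^ 2)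
          + ∑ m ∈ Finset.univ.erase m₀, g m ^ 2)
          = (vecx n d) ⬝ᵥ ((U.map C) *ᵥ vecx n d) := by
        rw [key, hsplit]; ring
      rw [this]; exact hUI
  have : (vecx n e) ⬝ᵥ g = ∑ m, vecx n e m * g m := rfl
  rw [this]
  exact Ideal.sum_mem I (fun m _ => I.mul_mem_left _ (hgI m))
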